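/- arXiv:2009.00102 — 5 statements merged into one kernel-verified Lean document; each statement's English description precedes it below -/
import Mathlib

section
/- Let D ≥ 1, let K and L be constant skew-symmetric real D×D matrices, let S : ℝ^D → ℝ be continuously differentiable, and let z : ℝ × ℝ → ℝ^D, written z(t,x), be twice continuously differentiable and satisfy the multisymplectic PDE K ∂_t z + L ∂_x z = ∇S(z) at every point. Define the momentum density M(t,x) := ½ (∂_x z)·(K z) and the momentum flux I(t,x) := ½ z·(K ∂_t z) − S(z). Then ∂_t M + ∂_x I = 0 at every point (t,x) ∈ ℝ². -/
open Matrix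

/-- Gradient of `S : ℝ^D → ℝ`, componentwise via the Fréchet derivative. -/
noncomputable def grad {D : ℕ} (S : (Fin D → ℝ) → ℝ) (p : Fin D → ℝ) : Fin D → ℝ :=
  fun i => fderiv ℝ S p (Pi.single i 1)

/-- Partial derivative in the first (time) variable. -/
noncomputable def pt {E : Type*} [NormedAddCommGroup E] [NormedSpace ℝ E]
    (z : ℝ × ℝ → E) (p : ℝ × ℝ) : E :=
  deriv (fun s => z (s, p.2)) p.1

/-- Partial derivative in the second (space) variable. -/
noncomputable def px {E : Type*} [NormedAddCommGroup E] [NormedSpace ℝ E]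
    (z : ℝ × ℝ → E) (p : ℝ × ℝ) : E :=
  deriv (fun y => z (p.1, y)) p.2

lemma hasDerivAt_dot {D : ℕ} {u v : ℝ → Fin D → ℝ} {u' v' : Fin D → ℝ} {t : ℝ}
    (hu : HasDerivAt u u' t) (hv : HasDerivAt v v' t) :
    HasDerivAt (fun s => u s ⬝ᵥ v s) (u' ⬝ᵥ v t + u t ⬝ᵥ v') t := by
  simp only [dotProduct]
  rw [← Finset.sum_add_distrib]
  apply HasDerivAt.fun_sum
  intro i _
  have hui : HasDerivAt (fun s => u s i) (u' i) t :=
    (ContinuousLinearMap.proj (R := ℝ) (φ := fun _ : Fin D => ℝ) i).hasFDerivAt.comp_hasDerivAt t hu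
  have hvi : HasDerivAt (fun s => v s i) (v' i) t :=
    (ContinuousLinearMap.proj (R := ℝ) (φ := fun _ : Fin D => ℝ) i).hasFDerivAt.comp_hasDerivAt t hv
  exact hui.mul hvi

lemma hasDerivAt_mulVec {D : ℕ} (K : Matrix (Fin D) (Fin D) ℝ) {v : ℝ → Fin D → ℝ}
    {v' : Fin D → ℝ} {t : ℝ} (hv : HasDerivAt v v' t) :
    HasDerivAt (fun s => K.mulVec (v s)) (K.mulVec v') t := by
  have := (LinearMap.toContinuousLinearMap K.mulVecLin).hasFDerivAt.comp_hasDerivAt t hv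
  simpa [Function.comp_def] using this

lemma dot_single_eq {D : ℕ} (φ : (Fin D → ℝ) →L[ℝ] ℝ) (v : Fin D → ℝ) :
    (fun i => φ (Pi.single i 1)) ⬝ᵥ v = φ v := by
  conv_rhs => rw [show v = ∑ i, Pi.single i (v i) from (Finset.univ_sum_single v).symm]
  rw [map_sum, dotProduct]
  congr 1
  funext i
  have h : Pi.single i (v i) = v i • (Pi.single i 1 : Fin D → ℝ) := by
    funext j
    by_cases hij : j = i <;> simp [Pi.single_apply, hij]
  rw [h, _root_.map_smul, smul_eq_mul, mul_comm]

lemma skew_dot {D : ℕ} {A : Matrix (Fin D) (Fin D) ℝ} (hA : Aᵀ = -A) (u v : Fin D → ℝ) :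
    u ⬝ᵥ A.mulVec v = -(v ⬝ᵥ A.mulVec u) := by
  rw [dotProduct_mulVec, ← mulVec_transpose, hA, Matrix.neg_mulVec]
  simp [dotProduct_comm]

lemma skew_dot_self {D : ℕ} {A : Matrix (Fin D) (Fin D) ℝ} (hA : Aᵀ = -A) (u : Fin D → ℝ) :
    u ⬝ᵥ A.mulVec u = 0 := by
  have := skew_dot hA u u; linarith

lemma line_t_hasDerivAt {E : Type*} [NormedAddCommGroup E] [NormedSpace ℝ E]
    {f : ℝ × ℝ → E} {p : ℝ × ℝ} (hf : DifferentiableAt ℝ f p) :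
    HasDerivAt (fun s => f (s, p.2)) (fderiv ℝ f p (1, 0)) p.1 := by
  have hline : HasDerivAt (fun s : ℝ => ((s, p.2) : ℝ × ℝ)) ((1 : ℝ), (0 : ℝ)) p.1 :=
    HasDerivAt.prodMk (hasDerivAt_id p.1) (hasDerivAt_const p.1 p.2)
  have := hf.hasFDerivAt.comp_hasDerivAt p.1 (by simpa using hline)
  simpa [Function.comp_def] using this

lemma line_x_hasDerivAt {E : Type*} [NormedAddCommGroup E] [NormedSpace ℝ E]
    {f : ℝ × ℝ → E} {p : ℝ × ℝ} (hf : DifferentiableAt ℝ f p) :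
    HasDerivAt (fun y => f (p.1, y)) (fderiv ℝ f p (0, 1)) p.2 := by
  have hline : HasDerivAt (fun y : ℝ => ((p.1, y) : ℝ × ℝ)) ((0 : ℝ), (1 : ℝ)) p.2 :=
    HasDerivAt.prodMk (hasDerivAt_const p.2 p.1) (hasDerivAt_id p.2)
  have := hf.hasFDerivAt.comp_hasDerivAt p.2 (by simpa using hline)
  simpa [Function.comp_def] using this

/-- Momentum conservation law for multisymplectic PDEs:
`∂_t M + ∂_x I = 0` where `M = ½ (∂_x z)·(K z)` and `I = ½ z·(K ∂_t z) − S(z)`. -/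
theorem momentum_conservation_law
    (D : ℕ) (hD : 1 ≤ D)
    (K L : Matrix (Fin D) (Fin D) ℝ)
    (hK : Kᵀ = -K) (hL : Lᵀ = -L)
    (S : (Fin D → ℝ) → ℝ) (hS : ContDiff ℝ 1 S)
    (z : ℝ × ℝ → Fin D → ℝ) (hz : ContDiff ℝ 2 z)
    (hpde : ∀ p : ℝ × ℝ, K.mulVec (pt z p) + L.mulVec (px z p) = grad S (z p)) :
    ∀ p : ℝ × ℝ,
      pt (fun q => (1 / 2 : ℝ) * (px z q ⬝ᵥ K.mulVec (z q))) p
        + px (fun q => (1 / 2 : ℝ) * (z q ⬝ᵥ K.mulVec (pt z q)) - S (z q)) p = 0 := by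
  intro p
  set F : ℝ × ℝ → (ℝ × ℝ) →L[ℝ] (Fin D → ℝ) := fderiv ℝ z with hF
  have hzd : Differentiable ℝ z := hz.differentiable (by norm_num)
  have hFc : ContDiff ℝ 1 F := hz.fderiv_right (by norm_num)
  have hFd : Differentiable ℝ F := hFc.differentiable (by norm_num)
  set zt' : ℝ × ℝ → Fin D → ℝ := fun q => F q (1, 0) with hzt'
  set zx' : ℝ × ℝ → Fin D → ℝ := fun q => F q (0, 1) with hzx'
  -- identification of partial derivatives
  have hpt : ∀ q, pt z q = zt' q := fun q => (line_t_hasDerivAt (hzd q)).deriv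
  have hpx : ∀ q, px z q = zx' q := fun q => (line_x_hasDerivAt (hzd q)).deriv
  -- differentiability of zt', zx'
  have happly : ∀ w : ℝ × ℝ, Differentiable ℝ (fun q => F q w) := by
    intro w
    exact (ContinuousLinearMap.apply ℝ (Fin D → ℝ) w).differentiable.comp hFd
  have hztd : Differentiable ℝ zt' := happly (1, 0)
  have hzxd : Differentiable ℝ zx' := happly (0, 1)
  -- second derivative and its symmetry
  have hFp : HasFDerivAt F (fderiv ℝ F p) p := (hFd p).hasFDerivAt
  have hsymm : fderiv ℝ F p (1, 0) (0, 1) = fderiv ℝ F p (0, 1) (1, 0) :=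
    second_derivative_symmetric (fun q => (hzd q).hasFDerivAt) hFp _ _
  set w : Fin D → ℝ := fderiv ℝ F p (1, 0) (0, 1) with hw
  -- derivatives of zx' along t-line, zt' along x-line
  have hFapply : ∀ a b : ℝ × ℝ, fderiv ℝ (fun q => F q b) p a = fderiv ℝ F p a b := by
    intro a b
    have h := ((ContinuousLinearMap.apply ℝ (Fin D → ℝ) b).hasFDerivAt.comp p hFp).fderiv
    rw [show (fun q => F q b) = (ContinuousLinearMap.apply ℝ (Fin D → ℝ) b) ∘ F from rfl, h]
    rfl
  have hzx_t : HasDerivAt (fun s => zx' (s, p.2)) w p.1 := by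
    have h1 := line_t_hasDerivAt (f := zx') (hzxd p)
    have h2 : fderiv ℝ zx' p (1, 0) = w := hFapply (1, 0) (0, 1)
    rwa [h2] at h1
  have hzt_x : HasDerivAt (fun y => zt' (p.1, y)) w p.2 := by
    have h1 := line_x_hasDerivAt (f := zt') (hztd p)
    have h2 : fderiv ℝ zt' p (0, 1) = w := by
      rw [hsymm]; exact hFapply (0, 1) (1, 0)
    rwa [h2] at h1
  have hz_t : HasDerivAt (fun s => z (s, p.2)) (zt' p) p.1 := line_t_hasDerivAt (hzd p)
  have hz_x : HasDerivAt (fun y => z (p.1, y)) (zx' p) p.2 := line_x_hasDerivAt (hzd p)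
  -- compute pt M p
  have hMfun : (fun q => (1 / 2 : ℝ) * (px z q ⬝ᵥ K.mulVec (z q)))
      = (fun q => (1 / 2 : ℝ) * (zx' q ⬝ᵥ K.mulVec (z q))) := by
    funext q; rw [hpx q]
  have hM : pt (fun q => (1 / 2 : ℝ) * (px z q ⬝ᵥ K.mulVec (z q))) p
      = (1 / 2 : ℝ) * (w ⬝ᵥ K.mulVec (z p) + zx' p ⬝ᵥ K.mulVec (zt' p)) := by
    rw [hMfun]
    have hdot : HasDerivAt (fun s => zx' (s, p.2) ⬝ᵥ K.mulVec (z (s, p.2)))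
        (w ⬝ᵥ K.mulVec (z (p.1, p.2)) + zx' (p.1, p.2) ⬝ᵥ K.mulVec (zt' p)) p.1 :=
      hasDerivAt_dot hzx_t (hasDerivAt_mulVec K hz_t)
    have := (hdot.const_mul ((1 : ℝ) / 2)).deriv
    simpa [pt] using this
  -- compute px I p
  have hIfun : (fun q => (1 / 2 : ℝ) * (z q ⬝ᵥ K.mulVec (pt z q)) - S (z q))
      = (fun q => (1 / 2 : ℝ) * (z q ⬝ᵥ K.mulVec (zt' q)) - S (z q)) := by
    funext q; rw [hpt q]
  have hSz : HasDerivAt (fun y => S (z (p.1, y))) (fderiv ℝ S (z p) (zx' p)) p.2 := by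
    have hSd : DifferentiableAt ℝ S (z (p.1, p.2)) :=
      (hS.differentiable (by norm_num)) (z (p.1, p.2))
    have := hSd.hasFDerivAt.comp_hasDerivAt p.2 hz_x
    simpa [Function.comp_def] using this
  have hI : px (fun q => (1 / 2 : ℝ) * (z q ⬝ᵥ K.mulVec (pt z q)) - S (z q)) p
      = (1 / 2 : ℝ) * (zx' p ⬝ᵥ K.mulVec (zt' p) + z p ⬝ᵥ K.mulVec w)
        - fderiv ℝ S (z p) (zx' p) := by
    rw [hIfun]
    have hdot : HasDerivAt (fun y => z (p.1, y) ⬝ᵥ K.mulVec (zt' (p.1, y)))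
        (zx' p ⬝ᵥ K.mulVec (zt' (p.1, p.2)) + z (p.1, p.2) ⬝ᵥ K.mulVec w) p.2 :=
      hasDerivAt_dot hz_x (hasDerivAt_mulVec K hzt_x)
    have := ((hdot.const_mul ((1 : ℝ) / 2)).sub hSz).deriv
    simpa [px, Pi.sub_def] using this
  rw [hM, hI]
  -- use the PDE
  have hgrad : fderiv ℝ S (z p) (zx' p) = zx' p ⬝ᵥ K.mulVec (zt' p) := by
    rw [← dot_single_eq (fderiv ℝ S (z p)) (zx' p)]
    have hgr : (fun i => fderiv ℝ S (z p) (Pi.single i 1)) = grad S (z p) := rfl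
    rw [hgr, ← hpde p, hpt p, hpx p, add_dotProduct]
    rw [dotProduct_comm (K.mulVec (zt' p)) (zx' p)]
    have h0 : L.mulVec (zx' p) ⬝ᵥ zx' p = 0 := by
      rw [dotProduct_comm]; exact skew_dot_self hL (zx' p)
    rw [h0, add_zero]
  have hskew : z p ⬝ᵥ K.mulVec w = -(w ⬝ᵥ K.mulVec (z p)) := skew_dot hK (z p) w
  rw [hgrad, hskew]
  ring
end

section
/- Let D ≥ 1, let K and L be constant skew-symmetric real D×D matrices, let S : ℝ^D → ℝ be twice continuously differentiable, and let z : ℝ × ℝ → ℝ^D be continuous. Suppose u, v : ℝ × ℝ → ℝ^D are continuously differentiable solutions of the variational (linearized) equation K ∂_t w + L ∂_x w = Hess S(z(t,x)) w, i.e. both u and v satisfy it pointwise, where Hess S(p) is the (symmetric) Hessian matrix of S at p. Then the multisymplectic conservation law ∂_t (u·(K v)) + ∂_x (u·(L v)) = 0 holds at every point (t,x) ∈ ℝ². -/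
open Matrix

/-- Hessian matrix of `S : ℝ^D → ℝ` at a point, via iterated Fréchet derivatives. -/
noncomputable def hess {D : ℕ} (S : (Fin D → ℝ) → ℝ) (p : Fin D → ℝ) :
    Matrix (Fin D) (Fin D) ℝ :=
  Matrix.of fun i j => fderiv ℝ (fun q => fderiv ℝ S q (Pi.single j 1)) p (Pi.single i 1)

/-- Product rule for the bilinear form `(a, b) ↦ a ⬝ᵥ M.mulVec b`. -/
lemma hasDerivAt_dotProduct_mulVec {D : ℕ} (M : Matrix (Fin D) (Fin D) ℝ)
    {f g : ℝ → Fin D → ℝ} {f' g' : Fin D → ℝ} {x : ℝ}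
    (hf : HasDerivAt f f' x) (hg : HasDerivAt g g' x) :
    HasDerivAt (fun s => f s ⬝ᵥ M.mulVec (g s))
      (f' ⬝ᵥ M.mulVec (g x) + f x ⬝ᵥ M.mulVec g') x := by
  have hfi : ∀ i, HasDerivAt (fun s => f s i) (f' i) x := fun i => by
    exact (hasDerivAt_pi.1 hf) i
  have hgi : ∀ j, HasDerivAt (fun s => g s j) (g' j) x := fun j => by
    exact (hasDerivAt_pi.1 hg) j
  have H : HasDerivAt (fun s => ∑ i, f s i * ∑ j, M i j * g s j)
      (∑ i, (f' i * ∑ j, M i j * g x j + f x i * ∑ j, M i j * g' j)) x :=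
    HasDerivAt.fun_sum fun i _ => (hfi i).mul (HasDerivAt.fun_sum fun j _ => (hgi j).const_mul (M i j))
  have e1 : (fun s => f s ⬝ᵥ M.mulVec (g s)) = fun s => ∑ i, f s i * ∑ j, M i j * g s j := by
    funext s; simp [dotProduct, mulVec]
  have e2 : f' ⬝ᵥ M.mulVec (g x) + f x ⬝ᵥ M.mulVec g'
      = ∑ i, (f' i * ∑ j, M i j * g x j + f x i * ∑ j, M i j * g' j) := by
    simp [dotProduct, mulVec, Finset.sum_add_distrib]
  rw [e1, e2]; exact H

/-- The Hessian of a `C²` function is symmetric. -/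
lemma hess_symm {D : ℕ} (S : (Fin D → ℝ) → ℝ) (hS : ContDiff ℝ 2 S) (p : Fin D → ℝ) :
    (hess S p)ᵀ = hess S p := by
  ext i j
  have hdS : ContDiff ℝ 1 (fderiv ℝ S) := hS.fderiv_right (le_refl _)
  have hf : ∀ y, HasFDerivAt S (fderiv ℝ S y) y := fun y =>
    ((hS.differentiable (by norm_num)) y).hasFDerivAt
  have hx : HasFDerivAt (fderiv ℝ S) (fderiv ℝ (fderiv ℝ S) p) p :=
    ((hdS.differentiable one_ne_zero) p).hasFDerivAt
  have key : ∀ w, fderiv ℝ (fun q => fderiv ℝ S q w) p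
      = (fderiv ℝ (fderiv ℝ S) p).flip w := by
    intro w
    have := fderiv_clm_apply (c := fderiv ℝ S) (u := fun _ => w)
      ((hdS.differentiable one_ne_zero) p) (differentiableAt_const w)
    simpa using this
  show hess S p j i = hess S p i j
  simp only [hess, Matrix.of_apply, key, ContinuousLinearMap.flip_apply]
  exact second_derivative_symmetric hf hx _ _

/-- The multisymplectic conservation law: if `u` and `v` solve the variational
(linearized) equation `K ∂_t w + L ∂_x w = Hess S(z) w`, then
`∂_t (u·(K v)) + ∂_x (u·(L v)) = 0`. -/
theorem multisymplectic_conservation_law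
    (D : ℕ) (hD : 1 ≤ D)
    (K L : Matrix (Fin D) (Fin D) ℝ)
    (hK : Kᵀ = -K) (hL : Lᵀ = -L)
    (S : (Fin D → ℝ) → ℝ) (hS : ContDiff ℝ 2 S)
    (z : ℝ × ℝ → Fin D → ℝ) (hz : Continuous z)
    (u v : ℝ × ℝ → Fin D → ℝ) (hu : ContDiff ℝ 1 u) (hv : ContDiff ℝ 1 v)
    (hu_var : ∀ p : ℝ × ℝ,
      K.mulVec (pt u p) + L.mulVec (px u p) = (hess S (z p)).mulVec (u p))
    (hv_var : ∀ p : ℝ × ℝ,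
      K.mulVec (pt v p) + L.mulVec (px v p) = (hess S (z p)).mulVec (v p)) :
    ∀ p : ℝ × ℝ,
      pt (fun q => u q ⬝ᵥ K.mulVec (v q)) p
        + px (fun q => u q ⬝ᵥ L.mulVec (v q)) p = 0 := by
  intro p
  have hud := hu.differentiable one_ne_zero
  have hvd := hv.differentiable one_ne_zero
  -- partial derivatives of u and v
  have hut : HasDerivAt (fun s => u (s, p.2)) (pt u p) p.1 := by
    have hd : DifferentiableAt ℝ (fun s => u (s, p.2)) p.1 :=
      (hud.comp (differentiable_id.prodMk (differentiable_const _))).differentiableAt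
    simpa [pt] using hd.hasDerivAt
  have hvt : HasDerivAt (fun s => v (s, p.2)) (pt v p) p.1 := by
    have hd : DifferentiableAt ℝ (fun s => v (s, p.2)) p.1 :=
      (hvd.comp (differentiable_id.prodMk (differentiable_const _))).differentiableAt
    simpa [pt] using hd.hasDerivAt
  have hux : HasDerivAt (fun y => u (p.1, y)) (px u p) p.2 := by
    have hd : DifferentiableAt ℝ (fun y => u (p.1, y)) p.2 :=
      (hud.comp ((differentiable_const _).prodMk differentiable_id)).differentiableAt
    simpa [px] using hd.hasDerivAt
  have hvx : HasDerivAt (fun y => v (p.1, y)) (px v p) p.2 := by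
    have hd : DifferentiableAt ℝ (fun y => v (p.1, y)) p.2 :=
      (hvd.comp ((differentiable_const _).prodMk differentiable_id)).differentiableAt
    simpa [px] using hd.hasDerivAt
  -- product rule in each variable
  have e1 : pt (fun q => u q ⬝ᵥ K.mulVec (v q)) p
      = pt u p ⬝ᵥ K.mulVec (v p) + u p ⬝ᵥ K.mulVec (pt v p) := by
    have := (hasDerivAt_dotProduct_mulVec K hut hvt).deriv
    simpa [pt] using this
  have e2 : px (fun q => u q ⬝ᵥ L.mulVec (v q)) p
      = px u p ⬝ᵥ L.mulVec (v p) + u p ⬝ᵥ L.mulVec (px v p) := by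
    have := (hasDerivAt_dotProduct_mulVec L hux hvx).deriv
    simpa [px] using this
  rw [e1, e2]
  have hsymm := hess_symm S hS (z p)
  have A : pt u p ⬝ᵥ K.mulVec (v p) + px u p ⬝ᵥ L.mulVec (v p)
      = -((hess S (z p)).mulVec (u p) ⬝ᵥ v p) := by
    rw [Matrix.dotProduct_mulVec, Matrix.dotProduct_mulVec,
      ← Matrix.mulVec_transpose, ← Matrix.mulVec_transpose, hK, hL,
      Matrix.neg_mulVec, Matrix.neg_mulVec, neg_dotProduct, neg_dotProduct,
      ← neg_add, ← add_dotProduct, hu_var p]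
  have B : u p ⬝ᵥ K.mulVec (pt v p) + u p ⬝ᵥ L.mulVec (px v p)
      = (hess S (z p)).mulVec (u p) ⬝ᵥ v p := by
    rw [← dotProduct_add, hv_var p, Matrix.dotProduct_mulVec,
      ← Matrix.mulVec_transpose, hsymm]
  linarith [A, B]
end

section
/- Let D ≥ 1, let M ≥ 1 and let 0 = x₀ < x₁ < ⋯ < x_M = 1 be a partition of [0,1]. For each m = 0,…,M−1 let f_m, g_m : [x_m, x_{m+1}] → ℝ^D be continuously differentiable. For m = 1,…,M−1 define the jump ⟦f⟧_m := f_{m−1}(x_m) − f_m(x_m), and with periodic identification define ⟦f⟧_0 = ⟦f⟧_M := f_{M−1}(1) − f_0(0); define ⟦g⟧_m analogously. Then Σ_{m=0}^{M−1} [ ∫_{x_m}^{x_{m+1}} f_m'·g_m dx − ½ ⟦f⟧_m·g_m(x_m) − ½ ⟦f⟧_{m+1}·g_m(x_{m+1}) ] = − Σ_{m=0}^{M−1} [ ∫_{x_m}^{x_{m+1}} g_m'·f_m dx − ½ ⟦g⟧_m·f_m(x_m) − ½ ⟦g⟧_{m+1}·f_m(x_{m+1}) ]. -/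
open Matrix intervalIntegral Finset

open Set in
private lemma ibp_dG {D : ℕ} {a b : ℝ} (hab : a < b) {f g : ℝ → Fin D → ℝ}
    (hf : ContDiffOn ℝ 1 f (Icc a b)) (hg : ContDiffOn ℝ 1 g (Icc a b)) :
    (∫ t in a..b, derivWithin f (Icc a b) t ⬝ᵥ g t)
      + (∫ t in a..b, derivWithin g (Icc a b) t ⬝ᵥ f t)
      = f b ⬝ᵥ g b - f a ⬝ᵥ g a := by
  have hab' : a ≤ b := hab.le
  have hu : UniqueDiffOn ℝ (Icc a b) := uniqueDiffOn_Icc hab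
  have hdf : ContinuousOn (derivWithin f (Icc a b)) (Icc a b) :=
    hf.continuousOn_derivWithin hu le_rfl
  have hdg : ContinuousOn (derivWithin g (Icc a b)) (Icc a b) :=
    hg.continuousOn_derivWithin hu le_rfl
  have hcf : ContinuousOn f (Icc a b) := hf.continuousOn
  have hcg : ContinuousOn g (Icc a b) := hg.continuousOn
  have hdot : ∀ (u v : ℝ → Fin D → ℝ), ContinuousOn u (Icc a b) →
      ContinuousOn v (Icc a b) → ContinuousOn (fun t => u t ⬝ᵥ v t) (Icc a b) := by
    intro u v hu' hv'
    simp only [dotProduct]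
    apply continuousOn_finset_sum
    intro i _
    exact (((continuous_apply i).comp_continuousOn hu').mul
        ((continuous_apply i).comp_continuousOn hv'))
  have hint1 : IntervalIntegrable (fun t => derivWithin f (Icc a b) t ⬝ᵥ g t)
      MeasureTheory.volume a b := by
    apply ContinuousOn.intervalIntegrable
    rw [uIcc_of_le hab']
    exact hdot _ _ hdf hcg
  have hint2 : IntervalIntegrable (fun t => derivWithin g (Icc a b) t ⬝ᵥ f t)
      MeasureTheory.volume a b := by
    apply ContinuousOn.intervalIntegrable
    rw [uIcc_of_le hab']
    exact hdot _ _ hdg hcf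
  have hder : ∀ t ∈ Icc a b, HasDerivWithinAt (fun t => f t ⬝ᵥ g t)
      (derivWithin f (Icc a b) t ⬝ᵥ g t + derivWithin g (Icc a b) t ⬝ᵥ f t) (Icc a b) t := by
    intro t ht
    have hfd : HasDerivWithinAt f (derivWithin f (Icc a b) t) (Icc a b) t :=
      ((hf.differentiableOn one_ne_zero) t ht).hasDerivWithinAt
    have hgd : HasDerivWithinAt g (derivWithin g (Icc a b) t) (Icc a b) t :=
      ((hg.differentiableOn one_ne_zero) t ht).hasDerivWithinAt
    have : HasDerivWithinAt (fun t => ∑ i : Fin D, f t i * g t i)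
        (∑ i : Fin D, (derivWithin f (Icc a b) t i * g t i
          + f t i * derivWithin g (Icc a b) t i)) (Icc a b) t := by
      apply HasDerivWithinAt.fun_sum
      intro i _
      exact (hasDerivWithinAt_pi.1 hfd i).mul (hasDerivWithinAt_pi.1 hgd i)
    convert this using 1
    simp [dotProduct, Finset.sum_add_distrib, mul_comm]
    simp [dotProduct, Finset.sum_add_distrib, mul_comm]
  have key : (∫ t in a..b, (derivWithin f (Icc a b) t ⬝ᵥ g t
        + derivWithin g (Icc a b) t ⬝ᵥ f t))
      = f b ⬝ᵥ g b - f a ⬝ᵥ g a := by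
    apply integral_eq_sub_of_hasDeriv_right_of_le hab' (hdot _ _ hcf hcg)
    · intro t ht
      have h1 := hder t (Ioo_subset_Icc_self ht)
      exact (h1.hasDerivAt (Icc_mem_nhds ht.1 ht.2)).hasDerivWithinAt
    · exact hint1.add hint2
  rw [← intervalIntegral.integral_add hint1 hint2]
  exact key

private lemma node_eq_dG {D : ℕ} (fa fb ga gb : Fin D → ℝ) :
    fa ⬝ᵥ ga - (1 / 2 : ℝ) * ((fa - fb) ⬝ᵥ ga + (ga - gb) ⬝ᵥ fa)
      = (1 / 2 : ℝ) * ((fa - fb) ⬝ᵥ gb + (ga - gb) ⬝ᵥ fb) + fb ⬝ᵥ gb := by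
  simp only [sub_dotProduct]
  rw [dotProduct_comm ga fa, dotProduct_comm gb fa, dotProduct_comm ga fb,
    dotProduct_comm gb fb]
  ring


/-- The jump of the piecewise function `f = (f_m)` at the node `x m`, with
periodic identification of the nodes `x 0 = 0` and `x M = 1`. -/
noncomputable def jmp {D : ℕ} (M : ℕ) (x : ℕ → ℝ) (f : ℕ → ℝ → Fin D → ℝ)
    (m : ℕ) : Fin D → ℝ :=
  if m = 0 ∨ m = M then f (M - 1) (x M) - f 0 (x 0)
  else f (m - 1) (x m) - f m (x m)

/-- Global skew-symmetry of the discrete first-derivative operator of the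
spatially discontinuous Galerkin method on the periodic domain `S¹ = [0,1)`:
`∫_{S¹} G(U)·V dx = − ∫_{S¹} U·G(V) dx` written out elementwise. -/
theorem global_skew_symmetry
    (D M : ℕ) (hD : 1 ≤ D) (hM : 1 ≤ M)
    (x : ℕ → ℝ) (hx0 : x 0 = 0) (hxM : x M = 1)
    (hxmono : ∀ m < M, x m < x (m + 1))
    (f g : ℕ → ℝ → Fin D → ℝ)
    (hf : ∀ m < M, ContDiffOn ℝ 1 (f m) (Set.Icc (x m) (x (m + 1))))
    (hg : ∀ m < M, ContDiffOn ℝ 1 (g m) (Set.Icc (x m) (x (m + 1)))) :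
    (∑ m ∈ Finset.range M,
        ((∫ t in (x m)..(x (m + 1)),
            derivWithin (f m) (Set.Icc (x m) (x (m + 1))) t ⬝ᵥ g m t)
          - (1 / 2 : ℝ) * (jmp M x f m ⬝ᵥ g m (x m))
          - (1 / 2 : ℝ) * (jmp M x f (m + 1) ⬝ᵥ g m (x (m + 1)))))
      = -∑ m ∈ Finset.range M,
          ((∫ t in (x m)..(x (m + 1)),
              derivWithin (g m) (Set.Icc (x m) (x (m + 1))) t ⬝ᵥ f m t)
            - (1 / 2 : ℝ) * (jmp M x g m ⬝ᵥ f m (x m))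
            - (1 / 2 : ℝ) * (jmp M x g (m + 1) ⬝ᵥ f m (x (m + 1)))) := by
  obtain ⟨K, rfl⟩ : ∃ K, M = K + 1 := ⟨M - 1, (Nat.succ_pred_eq_of_pos hM).symm⟩
  set L : ℕ → ℝ := fun m =>
    (1 / 2 : ℝ) * (jmp (K + 1) x f m ⬝ᵥ g m (x m) + jmp (K + 1) x g m ⬝ᵥ f m (x m))
      + f m (x m) ⬝ᵥ g m (x m) with hLdef
  set R : ℕ → ℝ := fun m =>
    f m (x (m + 1)) ⬝ᵥ g m (x (m + 1))
      - (1 / 2 : ℝ) * (jmp (K + 1) x f (m + 1) ⬝ᵥ g m (x (m + 1))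
          + jmp (K + 1) x g (m + 1) ⬝ᵥ f m (x (m + 1))) with hRdef
  rw [eq_neg_iff_add_eq_zero, ← Finset.sum_add_distrib]
  have hterm : ∀ m ∈ Finset.range (K + 1),
      ((∫ t in (x m)..(x (m + 1)),
            derivWithin (f m) (Set.Icc (x m) (x (m + 1))) t ⬝ᵥ g m t)
          - (1 / 2 : ℝ) * (jmp (K + 1) x f m ⬝ᵥ g m (x m))
          - (1 / 2 : ℝ) * (jmp (K + 1) x f (m + 1) ⬝ᵥ g m (x (m + 1))))
        + ((∫ t in (x m)..(x (m + 1)),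
            derivWithin (g m) (Set.Icc (x m) (x (m + 1))) t ⬝ᵥ f m t)
          - (1 / 2 : ℝ) * (jmp (K + 1) x g m ⬝ᵥ f m (x m))
          - (1 / 2 : ℝ) * (jmp (K + 1) x g (m + 1) ⬝ᵥ f m (x (m + 1))))
      = R m - L m := by
    intro m hm
    have hmlt := Finset.mem_range.1 hm
    have hib := ibp_dG (hxmono m hmlt) (hf m hmlt) (hg m hmlt)
    simp only [hLdef, hRdef]
    linarith [hib]
  have hsum : ∑ m ∈ Finset.range (K + 1), R m = ∑ m ∈ Finset.range (K + 1), L m := by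
    rw [Finset.sum_range_succ, Finset.sum_range_succ']
    congr 1
    · apply Finset.sum_congr rfl
      intro m hm
      have hmlt := Finset.mem_range.1 hm
      have hcond : ¬(m + 1 = 0 ∨ m + 1 = K + 1) := by omega
      simp only [hRdef, hLdef, jmp, if_neg hcond, Nat.add_sub_cancel]
      exact node_eq_dG _ _ _ _
    · have hcondM : ((K + 1 : ℕ) = 0 ∨ (K + 1 : ℕ) = K + 1) := Or.inr rfl
      have hcond0 : ((0 : ℕ) = 0 ∨ (0 : ℕ) = K + 1) := Or.inl rfl
      simp only [hRdef, hLdef, jmp, if_pos hcondM, if_pos hcond0, Nat.add_sub_cancel]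
      exact node_eq_dG _ _ _ _
  have h2 : (∑ m ∈ Finset.range (K + 1), (R m - L m)) = 0 := by
    rw [Finset.sum_sub_distrib, hsum, sub_self]
  exact (Finset.sum_congr rfl hterm).trans h2
end

section
/- Let D ≥ 1, let K and L be constant skew-symmetric real D×D matrices, let S : ℝ^D → ℝ be continuously differentiable, and let t₀ < t₁. Let Q = (t₀,t₁) × (0,1) with Lebesgue measure, let V be a closed subspace of the Hilbert space L²(Q; ℝ^D) such that for every f ∈ V the functions Kf and Lf (pointwise matrix multiplication) also belong to V, and let P denote the orthogonal projection of L²(Q; ℝ^D) onto V. Let Z : ℝ × ℝ → ℝ^D be continuously differentiable with the restriction of ∂_t Z to Q belonging to V, and suppose that for every φ ∈ V, ∫_Q ( K ∂_t Z + L ∂_x Z − ∇S(Z) )·φ dx dt = 0. Then ∫_Q (K ∂_t Z)·(∂_x Z) dx dt = ∫_Q ∇S(Z)·P(∂_x Z) dx dt. -/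
open MeasureTheory Matrix

/-- Matrix multiplication as a continuous linear map on Euclidean space. -/
noncomputable def mulVecCLM {D : ℕ} (A : Matrix (Fin D) (Fin D) ℝ) :
    EuclideanSpace ℝ (Fin D) →L[ℝ] EuclideanSpace ℝ (Fin D) :=
  LinearMap.toContinuousLinearMap (Matrix.toEuclideanLin A)


lemma mulVecCLM_inner_left {D : ℕ} (A : Matrix (Fin D) (Fin D) ℝ)
    (x y : EuclideanSpace ℝ (Fin D)) :
    (inner ℝ (mulVecCLM A x) y : ℝ) = inner ℝ x (mulVecCLM Aᵀ y) := by
  have h : Matrix.toEuclideanLin Aᵀ = LinearMap.adjoint (Matrix.toEuclideanLin A) := by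
    rw [← Matrix.conjTranspose_eq_transpose_of_trivial]
    exact Matrix.toEuclideanLin_conjTranspose_eq_adjoint A
  simp [mulVecCLM, h, LinearMap.adjoint_inner_right]

/-- The key identity in the proof of the discrete momentum conservation law:
testing the scheme with the `L²(Q)` orthogonal projection `P(∂_x Z)` of `∂_x Z`
onto the test space `V` gives
`∫_Q (K ∂_t Z)·(∂_x Z) = ∫_Q ∇S(Z)·P(∂_x Z)`. -/
theorem scheme_tested_with_projected_spatial_derivative
    (D : ℕ) (hD : 1 ≤ D)
    (K L : Matrix (Fin D) (Fin D) ℝ)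
    (hK : Kᵀ = -K) (hL : Lᵀ = -L)
    (S : EuclideanSpace ℝ (Fin D) → ℝ) (hS : ContDiff ℝ 1 S)
    (t₀ t₁ : ℝ) (ht : t₀ < t₁)
    (Q : Set (ℝ × ℝ)) (hQ : Q = Set.Ioo t₀ t₁ ×ˢ Set.Ioo (0 : ℝ) 1)
    (μ : Measure (ℝ × ℝ)) (hμ : μ = volume.restrict Q)
    (V : Submodule ℝ (Lp (EuclideanSpace ℝ (Fin D)) 2 μ))
    (hVclosed : IsClosed (V : Set (Lp (EuclideanSpace ℝ (Fin D)) 2 μ)))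
    (hVK : ∀ f ∈ V, (mulVecCLM K).compLp f ∈ V)
    (hVL : ∀ f ∈ V, (mulVecCLM L).compLp f ∈ V)
    -- `P` is the orthogonal projection of `L²(Q; ℝ^D)` onto `V`
    (P : Lp (EuclideanSpace ℝ (Fin D)) 2 μ → Lp (EuclideanSpace ℝ (Fin D)) 2 μ)
    (hPmem : ∀ f, P f ∈ V)
    (hPorth : ∀ f, ∀ g ∈ V, (inner ℝ (f - P f) g : ℝ) = 0)
    (Z : ℝ × ℝ → EuclideanSpace ℝ (Fin D)) (hZ : ContDiff ℝ 1 Z)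
    (hZt : MemLp (pt Z) 2 μ) (hZtV : hZt.toLp (pt Z) ∈ V)
    (hZx : MemLp (px Z) 2 μ)
    (hscheme : ∀ φ ∈ V,
      (∫ p, (inner ℝ (mulVecCLM K (pt Z p) + mulVecCLM L (px Z p)
          - gradient S (Z p)) (φ p) : ℝ) ∂μ) = 0) :
    (∫ p, (inner ℝ (mulVecCLM K (pt Z p)) (px Z p) : ℝ) ∂μ)
      = ∫ p, (inner ℝ (gradient S (Z p)) (P (hZx.toLp (px Z)) p) : ℝ) ∂μ := by
  classical
  -- pointwise skew-symmetry for L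
  have hLskew : ∀ x y : EuclideanSpace ℝ (Fin D),
      (inner ℝ (mulVecCLM L x) y : ℝ) = - inner ℝ x (mulVecCLM L y) := by
    intro x y
    rw [mulVecCLM_inner_left, hL]
    have : mulVecCLM (-L) y = - mulVecCLM L y := by
      simp [mulVecCLM, map_neg]
    rw [this, inner_neg_right]
  -- the gradient term is in L²
  have hQmeas : MeasurableSet Q := by
    rw [hQ]; exact (measurableSet_Ioo.prod measurableSet_Ioo)
  have hgradcont : Continuous fun x => gradient S x := by
    unfold gradient
    exact (InnerProductSpace.toDual ℝ
      (EuclideanSpace ℝ (Fin D))).symm.continuous.comp (hS.continuous_fderiv one_ne_zero)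
  have hccont : Continuous fun p => gradient S (Z p) := hgradcont.comp hZ.continuous
  have hQsub : Q ⊆ Set.Icc t₀ t₁ ×ˢ Set.Icc (0 : ℝ) 1 := by
    rw [hQ]; exact Set.prod_mono Set.Ioo_subset_Icc_self Set.Ioo_subset_Icc_self
  obtain ⟨M, hM⟩ := (isCompact_Icc.prod isCompact_Icc).exists_bound_of_continuousOn
    hccont.continuousOn
  have hcL2 : MemLp (fun p => gradient S (Z p)) 2 μ := by
    haveI : IsFiniteMeasure μ := by
      constructor
      rw [hμ, Measure.restrict_apply_univ]
      exact lt_of_le_of_lt (measure_mono hQsub)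
        (isCompact_Icc.prod isCompact_Icc).measure_lt_top
    refine MemLp.of_bound hccont.aestronglyMeasurable M ?_
    rw [hμ]
    filter_upwards [ae_restrict_mem hQmeas] with p hp
    exact hM p (hQsub hp)
  -- Lp elements
  set F : Lp (EuclideanSpace ℝ (Fin D)) 2 μ := hZx.toLp (px Z) with hF
  set G : Lp (EuclideanSpace ℝ (Fin D)) 2 μ := P F with hG
  set A : Lp (EuclideanSpace ℝ (Fin D)) 2 μ :=
    (mulVecCLM K).compLp (hZt.toLp (pt Z)) with hA
  set B : Lp (EuclideanSpace ℝ (Fin D)) 2 μ := (mulVecCLM L).compLp F with hB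
  set C : Lp (EuclideanSpace ℝ (Fin D)) 2 μ :=
    hcL2.toLp (fun p => gradient S (Z p)) with hC
  have hFcoe : F =ᵐ[μ] px Z := hZx.coeFn_toLp
  have hAcoe : A =ᵐ[μ] fun p => mulVecCLM K (pt Z p) := by
    filter_upwards [ContinuousLinearMap.coeFn_compLp (mulVecCLM K) (hZt.toLp (pt Z)),
      hZt.coeFn_toLp] with p h1 h2
    rw [h1, h2]
  have hBcoe : B =ᵐ[μ] fun p => mulVecCLM L (px Z p) := by
    filter_upwards [ContinuousLinearMap.coeFn_compLp (mulVecCLM L) F,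
      hFcoe] with p h1 h2
    rw [h1, h2]
  have hCcoe : C =ᵐ[μ] fun p => gradient S (Z p) := hcL2.coeFn_toLp
  -- the scheme tested with G
  have key : (inner ℝ (A + B - C) G : ℝ) = 0 := by
    rw [MeasureTheory.L2.inner_def, ← hscheme G (hPmem F)]
    refine integral_congr_ae ?_
    filter_upwards [Lp.coeFn_sub (A + B) C, Lp.coeFn_add A B, hAcoe, hBcoe, hCcoe]
      with p h1 h2 h3 h4 h5
    rw [h1, Pi.sub_apply, h2, Pi.add_apply, h3, h4, h5]
  have hsplit : (inner ℝ A G : ℝ) + inner ℝ B G - inner ℝ C G = 0 := by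
    rw [← inner_add_left, ← inner_sub_left]; exact key
  -- ⟪B, G⟫ = 0
  have hBG : (inner ℝ B G : ℝ) = 0 := by
    have hLGV : (mulVecCLM L).compLp G ∈ V := hVL G (hPmem F)
    have horth := hPorth F _ hLGV
    rw [← hG, inner_sub_left] at horth
    have e1 : (inner ℝ B G : ℝ) = - inner ℝ F ((mulVecCLM L).compLp G) := by
      rw [MeasureTheory.L2.inner_def, MeasureTheory.L2.inner_def, ← integral_neg]
      refine integral_congr_ae ?_
      filter_upwards [ContinuousLinearMap.coeFn_compLp (mulVecCLM L) F,
        ContinuousLinearMap.coeFn_compLp (mulVecCLM L) G] with p h1 h2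
      rw [h1, h2, hLskew]
    have e3 : (inner ℝ G ((mulVecCLM L).compLp G) : ℝ) = 0 := by
      have e4 : (inner ℝ ((mulVecCLM L).compLp G) G : ℝ)
          = - inner ℝ G ((mulVecCLM L).compLp G) := by
        rw [MeasureTheory.L2.inner_def, MeasureTheory.L2.inner_def, ← integral_neg]
        refine integral_congr_ae ?_
        filter_upwards [ContinuousLinearMap.coeFn_compLp (mulVecCLM L) G] with p h1
        rw [h1, hLskew]
      have e5 := real_inner_comm G ((mulVecCLM L).compLp G)
      linarith
    rw [e1]
    have : (inner ℝ F ((mulVecCLM L).compLp G) : ℝ)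
        = inner ℝ G ((mulVecCLM L).compLp G) := by linarith
    rw [this, e3, neg_zero]
  -- ⟪A, F⟫ = ⟪A, G⟫
  have hAV : A ∈ V := hVK _ hZtV
  have horthA := hPorth F A hAV
  rw [← hG, inner_sub_left] at horthA
  have hAF : (inner ℝ A F : ℝ) = inner ℝ A G := by
    have c1 := real_inner_comm A F
    have c2 := real_inner_comm A G
    linarith
  -- conclude
  have lhs_eq : (∫ p, (inner ℝ (mulVecCLM K (pt Z p)) (px Z p) : ℝ) ∂μ)
      = inner ℝ A F := by
    rw [MeasureTheory.L2.inner_def]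
    refine integral_congr_ae ?_
    filter_upwards [hAcoe, hFcoe] with p h1 h2
    rw [h1, h2]
  have rhs_eq : (∫ p, (inner ℝ (gradient S (Z p)) (P (hZx.toLp (px Z)) p) : ℝ) ∂μ)
      = inner ℝ C G := by
    rw [MeasureTheory.L2.inner_def]
    refine integral_congr_ae ?_
    filter_upwards [hCcoe] with p h1
    rw [h1]
  rw [lhs_eq, rhs_eq, hAF]
  linarith
end

section
/- Let D ≥ 1, let K and L be constant skew-symmetric real D×D matrices, let S : ℝ^D → ℝ be continuously differentiable, and let t₀ < t₁. Let Q = (t₀,t₁) × (0,1) with Lebesgue measure, let V be a closed subspace of L²(Q; ℝ^D) such that for every f ∈ V the functions Kf and Lf (pointwise matrix multiplication) also belong to V, and let P denote the orthogonal projection of L²(Q; ℝ^D) onto V. Let Z : ℝ × ℝ → ℝ^D be twice continuously differentiable and 1-periodic in x (Z(t, x+1) = Z(t,x) for all t, x), with the restriction of ∂_t Z to Q belonging to V, and suppose that for every φ ∈ V, ∫_Q ( K ∂_t Z + L ∂_x Z − ∇S(Z) )·φ dx dt = 0. Then the consistent discrete momentum conservation law holds: ∫_Q [ ∂_t( ½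 (∂_x Z)·(K Z) ) + ∂_x( ½ (∂_t Z)·(K Z) ) − ∇S(Z)·P(∂_x Z) ] dx dt = 0. -/
open MeasureTheory Matrix

section helpers

variable {E : Type*} [NormedAddCommGroup E] [NormedSpace ℝ E]

lemma hasDerivAt_fst (z : ℝ × ℝ → E) (hz : Differentiable ℝ z) (t c : ℝ) :
    HasDerivAt (fun s => z (s, c)) (fderiv ℝ z (t, c) (1, 0)) t := by
  have h1 : HasDerivAt (fun s : ℝ => (s, c)) ((1 : ℝ), (0 : ℝ)) t :=
    (hasDerivAt_id t).prodMk (hasDerivAt_const t c)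
  exact (hz (t, c)).hasFDerivAt.comp_hasDerivAt t h1

lemma hasDerivAt_snd (z : ℝ × ℝ → E) (hz : Differentiable ℝ z) (t c : ℝ) :
    HasDerivAt (fun y => z (t, y)) (fderiv ℝ z (t, c) (0, 1)) c := by
  have h1 : HasDerivAt (fun y : ℝ => (t, y)) ((0 : ℝ), (1 : ℝ)) c :=
    (hasDerivAt_const c t).prodMk (hasDerivAt_id c)
  exact (hz (t, c)).hasFDerivAt.comp_hasDerivAt c h1

lemma pt_eq (z : ℝ × ℝ → E) (hz : Differentiable ℝ z) (p : ℝ × ℝ) :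
    pt z p = fderiv ℝ z p (1, 0) :=
  (hasDerivAt_fst z hz p.1 p.2).deriv

lemma px_eq (z : ℝ × ℝ → E) (hz : Differentiable ℝ z) (p : ℝ × ℝ) :
    px z p = fderiv ℝ z p (0, 1) :=
  (hasDerivAt_snd z hz p.1 p.2).deriv

lemma hasDerivAt_px (z : ℝ × ℝ → E) (hz : Differentiable ℝ z) (t c : ℝ) :
    HasDerivAt (fun y => z (t, y)) (px z (t, c)) c := by
  rw [px_eq z hz]; exact hasDerivAt_snd z hz t c

lemma fderiv_apply_const (f : ℝ × ℝ → (ℝ × ℝ) →L[ℝ] E) (hf : Differentiable ℝ f)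
    (w v p : ℝ × ℝ) : fderiv ℝ (fun q => f q w) p v = fderiv ℝ f p v w := by
  rw [fderiv_clm_apply (hf p) (differentiableAt_const w)]
  simp

lemma contDiff_pt_of_contDiff (z : ℝ × ℝ → E) (hz : ContDiff ℝ 2 z) :
    ContDiff ℝ 1 (pt z) := by
  have : pt z = fun p => fderiv ℝ z p (1, 0) :=
    funext (pt_eq z (hz.differentiable (by norm_num)))
  rw [this]
  exact (hz.fderiv_right (by norm_num)).clm_apply contDiff_const

lemma contDiff_px_of_contDiff (z : ℝ × ℝ → E) (hz : ContDiff ℝ 2 z) :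
    ContDiff ℝ 1 (px z) := by
  have : px z = fun p => fderiv ℝ z p (0, 1) :=
    funext (px_eq z (hz.differentiable (by norm_num)))
  rw [this]
  exact (hz.fderiv_right (by norm_num)).clm_apply contDiff_const

lemma continuous_px_of_contDiff (g : ℝ × ℝ → E) (hg : ContDiff ℝ 1 g) :
    Continuous (px g) := by
  have : px g = fun p => fderiv ℝ g p (0, 1) :=
    funext (px_eq g (hg.differentiable one_ne_zero))
  rw [this]
  exact (hg.continuous_fderiv one_ne_zero).clm_apply continuous_const

end helpers

theorem skew_inner {D : ℕ} {K : Matrix (Fin D) (Fin D) ℝ} (hK : Kᵀ = -K)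
    (a b : EuclideanSpace ℝ (Fin D)) :
    (inner ℝ (mulVecCLM K a) b : ℝ) = -(inner ℝ a (mulVecCLM K b) : ℝ) := by
  have hK' : K = -Kᵀ := by rw [hK, neg_neg]
  show (inner ℝ (Matrix.toEuclideanLin K a) b : ℝ) = -(inner ℝ a (Matrix.toEuclideanLin K b) : ℝ)
  conv_lhs => rw [hK']
  have hconj : (Kᵀ : Matrix (Fin D) (Fin D) ℝ) = Kᴴ := by
    ext i j; simp [Matrix.conjTranspose]
  rw [hconj, map_neg, Matrix.toEuclideanLin_conjTranspose_eq_adjoint]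
  simp [LinearMap.adjoint_inner_left]

theorem pointwise_identity {D : ℕ} {K : Matrix (Fin D) (Fin D) ℝ} (hK : Kᵀ = -K)
    (Z : ℝ × ℝ → EuclideanSpace ℝ (Fin D)) (hZ : ContDiff ℝ 2 Z) (p : ℝ × ℝ) :
    pt (fun q => (1 / 2 : ℝ) * (inner ℝ (px Z q) (mulVecCLM K (Z q)) : ℝ)) p
      + px (fun q => (1 / 2 : ℝ) * (inner ℝ (pt Z q) (mulVecCLM K (Z q)) : ℝ)) p
    = px (fun q => (inner ℝ (pt Z q) (mulVecCLM K (Z q)) : ℝ)) p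
      + (inner ℝ (px Z p) (mulVecCLM K (pt Z p)) : ℝ) := by
  classical
  set AK := mulVecCLM K with hAK
  have hZd : Differentiable ℝ Z := hZ.differentiable (by norm_num)
  set F := fderiv ℝ Z with hFdef
  have hF : ContDiff ℝ 1 F := hZ.fderiv_right (by norm_num)
  have hFd : Differentiable ℝ F := hF.differentiable one_ne_zero
  set F1 : ℝ × ℝ → EuclideanSpace ℝ (Fin D) := fun q => F q (1, 0) with hF1def
  set F2 : ℝ × ℝ → EuclideanSpace ℝ (Fin D) := fun q => F q (0, 1) with hF2def
  have hF1 : ContDiff ℝ 1 F1 := hF.clm_apply contDiff_const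
  have hF2 : ContDiff ℝ 1 F2 := hF.clm_apply contDiff_const
  have hptZ : pt Z = F1 := funext fun q => pt_eq Z hZd q
  have hpxZ : px Z = F2 := funext fun q => px_eq Z hZd q
  have hsymm : fderiv ℝ F p (1, 0) (0, 1) = fderiv ℝ F p (0, 1) (1, 0) :=
    second_derivative_symmetric (fun y => (hZd y).hasFDerivAt) (hFd p).hasFDerivAt _ _
  have hZt : HasDerivAt (fun s => Z (s, p.2)) (F1 p) p.1 := hasDerivAt_fst Z hZd p.1 p.2
  have hZx : HasDerivAt (fun y => Z (p.1, y)) (F2 p) p.2 := hasDerivAt_snd Z hZd p.1 p.2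
  have hAKZt : HasDerivAt (fun s => AK (Z (s, p.2))) (AK (F1 p)) p.1 :=
    AK.hasFDerivAt.comp_hasDerivAt p.1 hZt
  have hAKZx : HasDerivAt (fun y => AK (Z (p.1, y))) (AK (F2 p)) p.2 :=
    AK.hasFDerivAt.comp_hasDerivAt p.2 hZx
  have hF2t : HasDerivAt (fun s => F2 (s, p.2)) (fderiv ℝ F p (1, 0) (0, 1)) p.1 := by
    have := hasDerivAt_fst F2 (hF2.differentiable one_ne_zero) p.1 p.2
    rwa [fderiv_apply_const F hFd (0, 1) (1, 0) p] at this
  have hF1x : HasDerivAt (fun y => F1 (p.1, y)) (fderiv ℝ F p (0, 1) (1, 0)) p.2 := by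
    have := hasDerivAt_snd F1 (hF1.differentiable one_ne_zero) p.1 p.2
    rwa [fderiv_apply_const F hFd (1, 0) (0, 1) p] at this
  have hm : pt (fun q => (1 / 2 : ℝ) * (inner ℝ (px Z q) (AK (Z q)) : ℝ)) p
      = (1 / 2 : ℝ) * ((inner ℝ (F2 p) (AK (F1 p)) : ℝ)
          + (inner ℝ (fderiv ℝ F p (1, 0) (0, 1)) (AK (Z p)) : ℝ)) := by
    rw [hpxZ]
    exact (HasDerivAt.const_mul ((1 : ℝ) / 2) (hF2t.inner ℝ hAKZt)).deriv
  have hf : px (fun q => (1 / 2 : ℝ) * (inner ℝ (pt Z q) (AK (Z q)) : ℝ)) p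
      = (1 / 2 : ℝ) * ((inner ℝ (F1 p) (AK (F2 p)) : ℝ)
          + (inner ℝ (fderiv ℝ F p (0, 1) (1, 0)) (AK (Z p)) : ℝ)) := by
    rw [hptZ]
    exact (HasDerivAt.const_mul ((1 : ℝ) / 2) (hF1x.inner ℝ hAKZx)).deriv
  have hg : px (fun q => (inner ℝ (pt Z q) (AK (Z q)) : ℝ)) p
      = (inner ℝ (F1 p) (AK (F2 p)) : ℝ)
          + (inner ℝ (fderiv ℝ F p (0, 1) (1, 0)) (AK (Z p)) : ℝ) := by
    rw [hptZ]
    exact (hF1x.inner ℝ hAKZx).deriv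
  have hskew : (inner ℝ (F1 p) (AK (F2 p)) : ℝ) = -(inner ℝ (F2 p) (AK (F1 p)) : ℝ) := by
    rw [real_inner_comm]
    exact skew_inner hK _ _
  rw [hm, hf, hg, hpxZ, hptZ, hsymm, hskew]
  ring

theorem integral_px_zero (g : ℝ × ℝ → ℝ) (hg : ContDiff ℝ 1 g)
    (hper : ∀ t : ℝ, g (t, 1) = g (t, 0)) (t₀ t₁ : ℝ) :
    ∫ p in Set.Ioo t₀ t₁ ×ˢ Set.Ioo (0 : ℝ) 1, px g p = 0 := by
  have hgd : Differentiable ℝ g := hg.differentiable one_ne_zero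
  have hGc : Continuous (px g) := continuous_px_of_contDiff g hg
  have hint : IntegrableOn (px g) (Set.Ioo t₀ t₁ ×ˢ Set.Ioo (0 : ℝ) 1) volume := by
    refine IntegrableOn.mono_set ?_
      (Set.prod_mono Set.Ioo_subset_Icc_self Set.Ioo_subset_Icc_self)
    exact hGc.continuousOn.integrableOn_compact (isCompact_Icc.prod isCompact_Icc)
  rw [MeasureTheory.Measure.volume_eq_prod] at hint ⊢
  rw [MeasureTheory.setIntegral_prod _ hint]
  have hinner : ∀ t : ℝ, (∫ x in Set.Ioo (0 : ℝ) 1, px g (t, x)) = 0 := by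
    intro t
    have h1 : (∫ x in Set.Ioo (0 : ℝ) 1, px g (t, x))
        = ∫ x in (0 : ℝ)..1, px g (t, x) := by
      rw [intervalIntegral.integral_of_le (by norm_num : (0:ℝ) ≤ 1),
        MeasureTheory.integral_Ioc_eq_integral_Ioo]
    rw [h1]
    have h2 : (∫ x in (0 : ℝ)..1, px g (t, x)) = g (t, 1) - g (t, 0) := by
      refine intervalIntegral.integral_eq_sub_of_hasDerivAt
        (fun x _ => hasDerivAt_px g hgd t x) ?_
      exact (hGc.comp (continuous_const.prodMk continuous_id)).intervalIntegrable 0 1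
    rw [h2, hper t, sub_self]
  have heq : (fun t => ∫ x in Set.Ioo (0 : ℝ) 1, px g (t, x)) = fun _ => (0 : ℝ) :=
    funext hinner
  rw [heq, integral_zero]

/-- The consistent discrete momentum conservation law for the space-time finite
element method: `∫_Q [ ∂_t(½ (∂_x Z)·(K Z)) + ∂_x(½ (∂_t Z)·(K Z))
− ∇S(Z)·P(∂_x Z) ] = 0`, where `P` is the `L²(Q)` orthogonal projection onto
the test space `V`. -/
theorem consistent_discrete_momentum_conservation
    (D : ℕ) (hD : 1 ≤ D)
    (K L : Matrix (Fin D) (Fin D) ℝ)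
    (hK : Kᵀ = -K) (hL : Lᵀ = -L)
    (S : EuclideanSpace ℝ (Fin D) → ℝ) (hS : ContDiff ℝ 1 S)
    (t₀ t₁ : ℝ) (ht : t₀ < t₁)
    (Q : Set (ℝ × ℝ)) (hQ : Q = Set.Ioo t₀ t₁ ×ˢ Set.Ioo (0 : ℝ) 1)
    (μ : Measure (ℝ × ℝ)) (hμ : μ = volume.restrict Q)
    (V : Submodule ℝ (Lp (EuclideanSpace ℝ (Fin D)) 2 μ))
    (hVclosed : IsClosed (V : Set (Lp (EuclideanSpace ℝ (Fin D)) 2 μ)))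
    (hVK : ∀ f ∈ V, (mulVecCLM K).compLp f ∈ V)
    (hVL : ∀ f ∈ V, (mulVecCLM L).compLp f ∈ V)
    -- `P` is the orthogonal projection of `L²(Q; ℝ^D)` onto `V`
    (P : Lp (EuclideanSpace ℝ (Fin D)) 2 μ → Lp (EuclideanSpace ℝ (Fin D)) 2 μ)
    (hPmem : ∀ f, P f ∈ V)
    (hPorth : ∀ f, ∀ g ∈ V, (inner ℝ (f - P f) g : ℝ) = 0)
    (Z : ℝ × ℝ → EuclideanSpace ℝ (Fin D)) (hZ : ContDiff ℝ 2 Z)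
    (hper : ∀ t x : ℝ, Z (t, x + 1) = Z (t, x))
    (hZt : MemLp (pt Z) 2 μ) (hZtV : hZt.toLp (pt Z) ∈ V)
    (hZx : MemLp (px Z) 2 μ)
    (hscheme : ∀ φ ∈ V,
      (∫ p, (inner ℝ (mulVecCLM K (pt Z p) + mulVecCLM L (px Z p)
          - gradient S (Z p)) (φ p) : ℝ) ∂μ) = 0) :
    (∫ p,
        (pt (fun q => (1 / 2 : ℝ) * (inner ℝ (px Z q) (mulVecCLM K (Z q)) : ℝ)) p
          + px (fun q => (1 / 2 : ℝ) * (inner ℝ (pt Z q) (mulVecCLM K (Z q)) : ℝ)) p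
          - (inner ℝ (gradient S (Z p)) (P (hZx.toLp (px Z)) p) : ℝ)) ∂μ) = 0 := by
  classical
  -- basic geometry of `Q`
  have hQsub : Q ⊆ Set.Icc t₀ t₁ ×ˢ Set.Icc (0 : ℝ) 1 := by
    rw [hQ]; exact Set.prod_mono Set.Ioo_subset_Icc_self Set.Ioo_subset_Icc_self
  have hQcomp : IsCompact (Set.Icc t₀ t₁ ×ˢ Set.Icc (0 : ℝ) 1) :=
    isCompact_Icc.prod isCompact_Icc
  have hQmeas : MeasurableSet Q := by
    rw [hQ]; exact measurableSet_Ioo.prod measurableSet_Ioo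
  haveI hμfin : IsFiniteMeasure μ := by
    constructor
    rw [hμ, Measure.restrict_apply_univ]
    exact lt_of_le_of_lt (measure_mono hQsub) hQcomp.measure_lt_top
  -- integrability of continuous functions on `Q`
  have hIntCont : ∀ {β : Type} [NormedAddCommGroup β] (h : ℝ × ℝ → β), Continuous h →
      Integrable h μ := by
    intro β _ h hc
    rw [hμ]
    exact (hc.continuousOn.integrableOn_compact hQcomp).mono_set hQsub
  have hMemCont : ∀ (h : ℝ × ℝ → EuclideanSpace ℝ (Fin D)), Continuous h →
      MemLp h 2 μ := by
    intro h hc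
    obtain ⟨C, hC⟩ := hQcomp.exists_bound_of_continuousOn hc.continuousOn
    refine MemLp.of_bound hc.aestronglyMeasurable C ?_
    rw [hμ]
    exact (ae_restrict_iff' hQmeas).2
      (Filter.Eventually.of_forall fun x hx => hC x (hQsub hx))
  -- basic differentiability facts
  have hZd : Differentiable ℝ Z := hZ.differentiable (by norm_num)
  have hptC1 : ContDiff ℝ 1 (pt Z) := contDiff_pt_of_contDiff Z hZ
  have hpxC1 : ContDiff ℝ 1 (px Z) := contDiff_px_of_contDiff Z hZ
  have hZ1 : ContDiff ℝ 1 Z := hZ.of_le (by norm_num)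
  -- the flux function `g`
  set g : ℝ × ℝ → ℝ := fun q => (inner ℝ (pt Z q) (mulVecCLM K (Z q)) : ℝ) with hgdef
  have hgC1 : ContDiff ℝ 1 g :=
    ContDiff.inner ℝ hptC1 ((mulVecCLM K).contDiff.comp hZ1)
  -- periodicity
  have hZ10 : ∀ t : ℝ, Z (t, 1) = Z (t, 0) := fun t => by simpa using hper t 0
  have hpt10 : ∀ t : ℝ, pt Z (t, 1) = pt Z (t, 0) := by
    intro t
    show deriv (fun s => Z (s, (1 : ℝ))) t = deriv (fun s => Z (s, (0 : ℝ))) t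
    congr 1
    funext s
    simpa using hper s 0
  have hgper : ∀ t : ℝ, g (t, 1) = g (t, 0) := by
    intro t
    simp only [hgdef, hZ10 t, hpt10 t]
  -- continuity of `W` and of the gradient term
  set W : ℝ × ℝ → ℝ := fun p => (inner ℝ (px Z p) (mulVecCLM K (pt Z p)) : ℝ) with hWdef
  have hWc : Continuous W :=
    Continuous.inner hpxC1.continuous ((mulVecCLM K).continuous.comp hptC1.continuous)
  set grd : ℝ × ℝ → EuclideanSpace ℝ (Fin D) := fun p => gradient S (Z p) with hgrddef
  have hgrdc : Continuous grd := by
    have h1 : grd = fun p =>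
        (InnerProductSpace.toDual ℝ (EuclideanSpace ℝ (Fin D))).symm (fderiv ℝ S (Z p)) := rfl
    rw [h1]
    exact (InnerProductSpace.toDual ℝ (EuclideanSpace ℝ (Fin D))).symm.continuous.comp
      ((hS.continuous_fderiv one_ne_zero).comp hZ.continuous)
  have hgrdMem : MemLp grd 2 μ := hMemCont grd hgrdc
  -- Lp elements
  set X := hZx.toLp (px Z) with hXdef
  set φ := P X with hφdef
  set T := hZt.toLp (pt Z) with hTdef
  set Gp := hgrdMem.toLp grd with hGpdef
  set AKT := (mulVecCLM K).compLp T with hAKTdef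
  set ALX := (mulVecCLM L).compLp X with hALXdef
  set ALφ := (mulVecCLM L).compLp φ with hALφdef
  have eX : (X : ℝ × ℝ → EuclideanSpace ℝ (Fin D)) =ᵐ[μ] px Z := hZx.coeFn_toLp
  have eT : (T : ℝ × ℝ → EuclideanSpace ℝ (Fin D)) =ᵐ[μ] pt Z := hZt.coeFn_toLp
  have eG : (Gp : ℝ × ℝ → EuclideanSpace ℝ (Fin D)) =ᵐ[μ] grd := hgrdMem.coeFn_toLp
  have eAKT : (AKT : ℝ × ℝ → EuclideanSpace ℝ (Fin D))
      =ᵐ[μ] fun a => mulVecCLM K (pt Z a) := by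
    filter_upwards [(mulVecCLM K).coeFn_compLp' T, eT] with a h1 h2
    rw [h1, h2]
  have eALX : (ALX : ℝ × ℝ → EuclideanSpace ℝ (Fin D))
      =ᵐ[μ] fun a => mulVecCLM L (px Z a) := by
    filter_upwards [(mulVecCLM L).coeFn_compLp' X, eX] with a h1 h2
    rw [h1, h2]
  have eALφ : (ALφ : ℝ × ℝ → EuclideanSpace ℝ (Fin D))
      =ᵐ[μ] fun a => mulVecCLM L (φ a) := (mulVecCLM L).coeFn_compLp' φ
  -- integrability of the inner ℝ product terms
  have iKφ : Integrable (fun a => (inner ℝ (mulVecCLM K (pt Z a)) (φ a) : ℝ)) μ := by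
    refine (L2.integrable_inner (𝕜 := ℝ) AKT φ).congr ?_
    filter_upwards [eAKT] with a h
    rw [h]
  have iLφ : Integrable (fun a => (inner ℝ (mulVecCLM L (px Z a)) (φ a) : ℝ)) μ := by
    refine (L2.integrable_inner (𝕜 := ℝ) ALX φ).congr ?_
    filter_upwards [eALX] with a h
    rw [h]
  have iGφ : Integrable (fun a => (inner ℝ (grd a) (φ a) : ℝ)) μ := by
    refine (L2.integrable_inner (𝕜 := ℝ) Gp φ).congr ?_
    filter_upwards [eG] with a h
    rw [h]
  -- the scheme applied to `φ`
  have hs0 := hscheme φ (hPmem X)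
  simp only [inner_sub_left, inner_add_left] at hs0
  have hs : ((∫ a, (inner ℝ (mulVecCLM K (pt Z a)) (φ a) : ℝ) ∂μ)
      + ∫ a, (inner ℝ (mulVecCLM L (px Z a)) (φ a) : ℝ) ∂μ)
      - (∫ a, (inner ℝ (grd a) (φ a) : ℝ) ∂μ) = 0 := by
    have iSum : Integrable (fun a => (inner ℝ (mulVecCLM K (pt Z a)) (φ a) : ℝ)
        + (inner ℝ (mulVecCLM L (px Z a)) (φ a) : ℝ)) μ := iKφ.add iLφ
    rw [← integral_add iKφ iLφ, ← integral_sub iSum iGφ]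
    rw [← hs0]
  -- the `L` term vanishes
  have h2 : (∫ a, (inner ℝ (mulVecCLM L (px Z a)) (φ a) : ℝ) ∂μ) = 0 := by
    have e1 : ∀ a, (inner ℝ (mulVecCLM L (px Z a)) (φ a) : ℝ)
        = -(inner ℝ (px Z a) (mulVecCLM L (φ a)) : ℝ) := fun a => skew_inner hL _ _
    have c1 : (∫ a, (inner ℝ (mulVecCLM L (px Z a)) (φ a) : ℝ) ∂μ)
        = -∫ a, (inner ℝ (px Z a) (mulVecCLM L (φ a)) : ℝ) ∂μ := by
      simp_rw [e1]
      exact integral_neg _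
    have c2 : (∫ a, (inner ℝ (px Z a) (mulVecCLM L (φ a)) : ℝ) ∂μ)
        = ∫ a, (inner ℝ (X a) (ALφ a) : ℝ) ∂μ := by
      apply integral_congr_ae
      filter_upwards [eX, eALφ] with a ha hb
      rw [ha, hb]
    have horth := hPorth X ALφ (hVL φ (hPmem X))
    rw [inner_sub_left] at horth
    have c3 : (inner ℝ X ALφ : ℝ) = (inner ℝ φ ALφ : ℝ) := by linarith
    have c4 : (inner ℝ φ ALφ : ℝ) = 0 := by
      rw [L2.inner_def]
      have : (fun a => (inner ℝ (φ a) (ALφ a) : ℝ)) =ᵐ[μ] fun _ => (0 : ℝ) := by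
        filter_upwards [eALφ] with a h
        rw [h]
        have hskew := skew_inner hL (φ a) (φ a)
        have hc := real_inner_comm (mulVecCLM L (φ a)) (φ a)
        linarith
      rw [integral_congr_ae this, integral_zero]
    rw [c1, c2, ← L2.inner_def, c3, c4, neg_zero]
  -- the `K` term
  have h1 : (∫ a, (inner ℝ (mulVecCLM K (pt Z a)) (φ a) : ℝ) ∂μ)
      = ∫ a, W a ∂μ := by
    have c1 : (∫ a, (inner ℝ (mulVecCLM K (pt Z a)) (φ a) : ℝ) ∂μ)
        = ∫ a, (inner ℝ (AKT a) (φ a) : ℝ) ∂μ := by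
      apply integral_congr_ae
      filter_upwards [eAKT] with a h
      rw [h]
    have horth := hPorth X AKT (hVK T hZtV)
    rw [inner_sub_left] at horth
    have c2 : (inner ℝ X AKT : ℝ) = (inner ℝ φ AKT : ℝ) := by linarith
    have c3 : (∫ a, (inner ℝ (X a) (AKT a) : ℝ) ∂μ) = ∫ a, W a ∂μ := by
      apply integral_congr_ae
      filter_upwards [eX, eAKT] with a ha hb
      rw [ha, hb]
    rw [c1, ← L2.inner_def, real_inner_comm, ← c2, L2.inner_def, c3]
  -- combine: ∫ W = ∫ ⟪grd, φ⟫
  have hkey : (∫ a, W a ∂μ) = ∫ a, (inner ℝ (grd a) (φ a) : ℝ) ∂μ := by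
    rw [h1, h2] at hs
    linarith
  -- the boundary term integrates to zero
  have hIg : Integrable (px g) μ := hIntCont (px g) (continuous_px_of_contDiff g hgC1)
  have hIgz : (∫ a, px g a ∂μ) = 0 := by
    rw [hμ, hQ]
    exact integral_px_zero g hgC1 hgper t₀ t₁
  have hIW : Integrable W μ := hIntCont W hWc
  -- rewrite the integrand using the pointwise identity
  have hintegrand : ∀ p : ℝ × ℝ,
      pt (fun q => (1 / 2 : ℝ) * (inner ℝ (px Z q) (mulVecCLM K (Z q)) : ℝ)) p
        + px (fun q => (1 / 2 : ℝ) * (inner ℝ (pt Z q) (mulVecCLM K (Z q)) : ℝ)) p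
        - (inner ℝ (gradient S (Z p)) (φ p) : ℝ)
      = px g p + (W p - (inner ℝ (grd p) (φ p) : ℝ)) := by
    intro p
    have := pointwise_identity hK Z hZ p
    simp only [hgdef, hWdef, hgrddef]
    linarith
  calc (∫ p,
        (pt (fun q => (1 / 2 : ℝ) * (inner ℝ (px Z q) (mulVecCLM K (Z q)) : ℝ)) p
          + px (fun q => (1 / 2 : ℝ) * (inner ℝ (pt Z q) (mulVecCLM K (Z q)) : ℝ)) p
          - (inner ℝ (gradient S (Z p)) (φ p) : ℝ)) ∂μ)
      = ∫ p, (px g p + (W p - (inner ℝ (grd p) (φ p) : ℝ))) ∂μ := by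
        apply integral_congr_ae
        exact Filter.Eventually.of_forall hintegrand
    _ = (∫ p, px g p ∂μ) + ∫ p, (W p - (inner ℝ (grd p) (φ p) : ℝ)) ∂μ :=
        integral_add hIg (hIW.sub iGφ)
    _ = 0 := by
        rw [hIgz, integral_sub hIW iGφ, hkey]
        ring
end
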